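/- arXiv:1509.07330 — 2 statements merged into one kernel-verified Lean document; each statement's English description precedes it below -/
import Mathlib

section
/- For any nonincreasing sequence of nonnegative valuations v_1 ≥ v_2 ≥ ... ≥ v_ℓ ≥ 0, the total value Σ_{k=1}^ℓ v_k (the revenue of perfect price discrimination) is at most H_ℓ times the best fixed-price revenue max_{j ∈ [1,ℓ]} j · v_j, where H_ℓ = Σ_{i=1}^ℓ 1/i. -/
open Finset

/-- Perfect price-discrimination revenue is at most `H_ℓ` times the best
fixed-price revenue `max_{j ∈ [1,ℓ]} j · v_j`. -/
theorem stmt1 (ℓ : ℕ) (hℓ : 1 ≤ ℓ) (v : ℕ → ℝ)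
    (hnonneg : ∀ i, 1 ≤ i → 0 ≤ v i)
    (hmono : ∀ i, 1 ≤ i → v (i + 1) ≤ v i)
    (M : ℝ)
    (hM : IsGreatest {r : ℝ | ∃ j ∈ Finset.Icc 1 ℓ, r = (j : ℝ) * v j} M) :
    (∑ k ∈ Finset.Icc 1 ℓ, v k) ≤ (∑ i ∈ Finset.Icc 1 ℓ, 1 / (i : ℝ)) * M := by
  rw [Finset.sum_mul]
  apply Finset.sum_le_sum
  intro k hk
  simp only [Finset.mem_Icc] at hk
  have hk1 : 1 ≤ k := hk.1
  have hkpos : (0 : ℝ) < k := by exact_mod_cast hk1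
  have hle : (k : ℝ) * v k ≤ M := hM.2 ⟨k, Finset.mem_Icc.mpr hk, rfl⟩
  rw [one_div, ← div_eq_inv_mul, le_div_iff₀ hkpos, mul_comm]
  exact hle
end

section
/- Let p : Fin T → ℝ be preannounced prices, c ≥ 0 a per-period unit storage cost, and suppose a rational consumer makes a positive purchase in period t. Then p t ≤ p t' + (t - t') · c for all t' < t. -/
lemma aux_sum_ite (m n : ℕ) (h : m ≤ n) :
    ∑ s ∈ Finset.range n, (if m ≤ s then (1:ℤ) else 0) = (n : ℤ) - m := by
  induction n with
  | zero => interval_cases m; simp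
  | succ n ih =>
    rw [Finset.sum_range_succ]
    by_cases h' : m ≤ n
    · rw [ih h', if_pos h']; push_cast; ring
    · rw [Finset.sum_eq_zero (fun s hs => by
        rw [if_neg]; simp at hs; omega), if_neg h']
      have : m = n + 1 := by omega
      subst this; push_cast; ring



open Finset

/-- Storage level after period `t` under purchases `q` and consumption `x`. -/
def storageLevel (q x : ℕ → ℕ) (t : ℕ) : ℤ :=
  ∑ s ∈ Finset.range (t + 1), ((q s : ℤ) - (x s : ℤ))

/-- A plan is feasible if storage is never negative. -/
def FeasiblePlan (T : ℕ) (q x : ℕ → ℕ) : Prop :=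
  ∀ t < T, 0 ≤ storageLevel q x t

/-- Total utility of a plan: consumption utility minus payments minus storage
costs, where `U x t` is the utility of consuming `x` units in period `t`. -/
noncomputable def planUtility (T : ℕ) (U : ℕ → ℕ → ℝ) (p : ℕ → ℝ) (c : ℝ)
    (q x : ℕ → ℕ) : ℝ :=
  ∑ t ∈ Finset.range T,
    (U (x t) t - p t * (q t : ℝ) - c * (storageLevel q x t : ℝ))

/-- If a rational consumer (one whose plan maximizes utility among feasible
plans) makes a positive purchase in period `t`, then
`p t ≤ p t' + (t - t') · c` for all `t' < t`. -/
theorem stmt6 (T : ℕ) (U : ℕ → ℕ → ℝ) (p : ℕ → ℝ) (c : ℝ) (hc : 0 ≤ c)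
    (q x : ℕ → ℕ) (hfeas : FeasiblePlan T q x)
    (hopt : ∀ q' x' : ℕ → ℕ, FeasiblePlan T q' x' →
      planUtility T U p c q' x' ≤ planUtility T U p c q x)
    (t : ℕ) (ht : t < T) (hq : 0 < q t) :
    ∀ t' < t, p t ≤ p t' + ((t : ℝ) - (t' : ℝ)) * c := by
  intro t' ht'
  have htt : t' ≠ t := Nat.ne_of_lt ht'
  have ht'T : t' < T := lt_trans ht' ht
  set q' : ℕ → ℕ := fun s => if s = t' then q t' + 1 else if s = t then q t - 1 else q s with hq'def
  have hqdiff : ∀ u, (q' u : ℤ) - (q u : ℤ) =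
      (if u = t' then 1 else 0) + (if u = t then -1 else 0) := by
    intro u
    by_cases h1 : u = t'
    · subst h1; simp [hq'def, htt]
    · by_cases h2 : u = t
      · subst h2; simp [hq'def, h1]; omega
      · simp [hq'def, h1, h2]
  have hstor : ∀ s, storageLevel q' x s - storageLevel q x s =
      (if t' ≤ s then 1 else 0) - (if t ≤ s then 1 else 0) := by
    intro s
    unfold storageLevel
    rw [← Finset.sum_sub_distrib]
    have hcongr : ∀ u ∈ Finset.range (s+1),
        ((q' u : ℤ) - (x u : ℤ)) - ((q u : ℤ) - (x u : ℤ)) =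
        (if u = t' then (1:ℤ) else 0) + (if u = t then -1 else 0) := by
      intro u _
      have := hqdiff u; linarith
    rw [Finset.sum_congr rfl hcongr, Finset.sum_add_distrib,
      Finset.sum_ite_eq' (Finset.range (s+1)) t' (fun _ => (1:ℤ)),
      Finset.sum_ite_eq' (Finset.range (s+1)) t (fun _ => (-1:ℤ))]
    simp only [Finset.mem_range, Nat.lt_succ_iff]
    split_ifs <;> ring
  have hfeas' : FeasiblePlan T q' x := by
    intro s hs
    have h1 := hfeas s hs
    have h2 := hstor s
    split_ifs at h2 <;> omega
  have key : planUtility T U p c q' x - planUtility T U p c q x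
      = p t - p t' - c * ((t:ℝ) - (t':ℝ)) := by
    unfold planUtility
    rw [← Finset.sum_sub_distrib]
    have hcongr : ∀ s ∈ Finset.range T,
        (U (x s) s - p s * (q' s : ℝ) - c * (storageLevel q' x s : ℝ)) -
        (U (x s) s - p s * (q s : ℝ) - c * (storageLevel q x s : ℝ)) =
        (if s = t' then -p s else 0) + (if s = t then p s else 0) +
          (-c) * ((((if t' ≤ s then 1 else 0) - (if t ≤ s then 1 else 0) : ℤ)) : ℝ) := by
      intro s _
      have h1 : (q' s : ℝ) - (q s : ℝ) =
          (((if s = t' then (1:ℤ) else 0) + (if s = t then -1 else 0) : ℤ) : ℝ) := by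
        rw [← hqdiff s]; push_cast; ring
      have h2 : (storageLevel q' x s : ℝ) - (storageLevel q x s : ℝ) =
          ((((if t' ≤ s then 1 else 0) - (if t ≤ s then 1 else 0) : ℤ)) : ℝ) := by
        rw [← hstor s]; push_cast; ring
      have e1 : p s * (q s : ℝ) - p s * (q' s : ℝ) =
          -(p s) * (((if s = t' then (1:ℤ) else 0) + (if s = t then -1 else 0) : ℤ) : ℝ) := by
        rw [← h1]; ring
      have goal1 : -(p s) * (((if s = t' then (1:ℤ) else 0) + (if s = t then -1 else 0) : ℤ) : ℝ)
          = (if s = t' then -p s else 0) + (if s = t then p s else 0) := by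
        split_ifs <;> push_cast <;> ring
      calc (U (x s) s - p s * (q' s : ℝ) - c * (storageLevel q' x s : ℝ)) -
          (U (x s) s - p s * (q s : ℝ) - c * (storageLevel q x s : ℝ))
          = (p s * (q s : ℝ) - p s * (q' s : ℝ)) +
            (-c) * ((storageLevel q' x s : ℝ) - (storageLevel q x s : ℝ)) := by ring
        _ = _ := by rw [e1, goal1, h2]
    rw [Finset.sum_congr rfl hcongr, Finset.sum_add_distrib, Finset.sum_add_distrib,
      Finset.sum_ite_eq' (Finset.range T) t' (fun s => -p s),
      Finset.sum_ite_eq' (Finset.range T) t (fun s => p s),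
      ← Finset.mul_sum]
    have hsum : ∑ s ∈ Finset.range T,
        ((((if t' ≤ s then 1 else 0) - (if t ≤ s then 1 else 0) : ℤ)) : ℝ)
        = (t : ℝ) - (t' : ℝ) := by
      rw [← Int.cast_sum]
      rw [Finset.sum_sub_distrib, aux_sum_ite t' T (le_of_lt ht'T), aux_sum_ite t T (le_of_lt ht)]
      push_cast; ring
    rw [hsum]
    simp only [Finset.mem_range, if_pos ht'T, if_pos ht]
    ring
  have hle := hopt q' x hfeas'
  have : p t - p t' - c * ((t:ℝ) - (t':ℝ)) ≤ 0 := by linarith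
  linarith [this]
end
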